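/- arXiv:2003.06641 — 2 statements merged into one kernel-verified Lean document; each statement's English description precedes it below -/
import Mathlib

section
/- Let E be a complex inner product space, let η : E → E be a self-adjoint ℂ-linear map that is positive definite (⟪x, η x⟫ is real and positive for every x ≠ 0), and let Θ : E → E be an additive, conjugate-linear map (Θ(c•x) = conj(c)•Θ(x)) satisfying the pseudo-antiunitarity condition ⟪Θx, η(Θy)⟫ = conj(⟪x, η y⟫) for all x, y ∈ E, and Θ(Θψ) = −ψ for all ψ ∈ E. Then for every ψ ∈ E one has ⟪Θψ, η ψ⟫ = 0, and for every nonzero ψ ∈ E the vectors ψ and Θψ are linearly independent over ℂ. -/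
local notation "⟪" x ", " y "⟫" => @inner ℂ _ _ x y

/-- Kramers-type theorem for a pseudo-antiunitary operator `Θ` squaring to `-1`
with respect to a self-adjoint positive-definite metric `η`: every `ψ` is
`η`-orthogonal to `Θψ`, and for nonzero `ψ` the pair `ψ, Θψ` is linearly independent. -/
theorem kramers_pseudo_antiunitary {E : Type*} [NormedAddCommGroup E]
    [InnerProductSpace ℂ E] (η : E →ₗ[ℂ] E)
    (hsa : ∀ x y : E, ⟪η x, y⟫ = ⟪x, η y⟫)
    (hpos : ∀ x : E, x ≠ 0 → 0 < (⟪x, η x⟫).re ∧ (⟪x, η x⟫).im = 0)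
    (Θ : E → E)
    (hadd : ∀ x y : E, Θ (x + y) = Θ x + Θ y)
    (hconj : ∀ (c : ℂ) (x : E), Θ (c • x) = (starRingEnd ℂ c) • Θ x)
    (hpau : ∀ x y : E, ⟪Θ x, η (Θ y)⟫ = starRingEnd ℂ ⟪x, η y⟫)
    (hsq : ∀ ψ : E, Θ (Θ ψ) = -ψ) :
    (∀ ψ : E, ⟪Θ ψ, η ψ⟫ = 0) ∧
      ∀ ψ : E, ψ ≠ 0 → LinearIndependent ℂ ![ψ, Θ ψ] := by
  have horth : ∀ ψ : E, ⟪Θ ψ, η ψ⟫ = 0 := by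
    intro ψ
    have h1 : ⟪Θ ψ, η ψ⟫ = -⟪Θ ψ, η (Θ (Θ ψ))⟫ := by
      rw [hsq]; simp
    have h2 : ⟪Θ ψ, η (Θ (Θ ψ))⟫ = starRingEnd ℂ ⟪ψ, η (Θ ψ)⟫ := hpau ψ (Θ ψ)
    have h3 : ⟪ψ, η (Θ ψ)⟫ = starRingEnd ℂ ⟪Θ ψ, η ψ⟫ := by
      rw [← hsa]; exact (inner_conj_symm _ _).symm
    have h : ⟪Θ ψ, η ψ⟫ = -⟪Θ ψ, η ψ⟫ :=
      h1.trans (by rw [h2, h3, Complex.conj_conj])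
    linear_combination h / 2
  refine ⟨horth, fun ψ hψ => ?_⟩
  have hne : ⟪ψ, η ψ⟫ ≠ 0 := by
    intro h
    have := (hpos ψ hψ).1
    rw [h] at this; simp at this
  have hΘψ : Θ ψ ≠ 0 := by
    intro h
    have h0 : Θ (0 : E) = 0 := by
      have := (hadd 0 0).symm
      simpa using this
    have := hsq ψ
    rw [h, h0] at this
    exact hψ (by simpa using this.symm)
  rw [LinearIndependent.pair_iff]
  intro s t hst
  have hinner : ⟪s • ψ + t • Θ ψ, η ψ⟫ = 0 := by rw [hst]; simp
  have hs : s = 0 := by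
    have h : starRingEnd ℂ s * ⟪ψ, η ψ⟫ + starRingEnd ℂ t * ⟪Θ ψ, η ψ⟫ = 0 := by
      linear_combination (by simpa [inner_add_left, inner_smul_left] using hinner : ⟪ψ, η ψ⟫ * starRingEnd ℂ s + ⟪Θ ψ, η ψ⟫ * starRingEnd ℂ t = 0)
    rw [horth ψ] at h
    simp at h
    rcases h with h | h
    · simpa using congrArg (starRingEnd ℂ) h
    · exact absurd h hne
  have ht : t = 0 := by
    rw [hs, zero_smul, zero_add] at hst
    rcases smul_eq_zero.mp hst with h | h
    · exact h
    · exact absurd h hΘψ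
  exact ⟨hs, ht⟩
end

section
/- Define the 3×3 complex matrices S_x = (1/√2)·[[0,1,0],[1,0,1],[0,1,0]], S_y = (1/√2)·[[0,−i,0],[i,0,−i],[0,i,0]], S_z = diag(1,0,−1), S₊ = S_z − i·S_y, S₋ = S_z + i·S_y, h(φ) = e^{iφ}·S₊ + e^{−iφ}·S₋, and the normalized S_x-eigenvectors v₁ = (1/2)·(1, √2, 1), v₀ = (1/√2)·(1, 0, −1), v₋₁ = (1/2)·(1, −√2, 1). Then for all real θ, φ and all s_i, s_f ∈ {−1, 0, 1}, the matrix element ⟪v_{s_f}, exp(−i·(θ/2)·h(φ))·v_{s_i}⟫ equals e^{i(s_f−s_i)φ}·(1/2)^{(s_f² + s_i²)/2}·( i^{|s_f−s_i|}·cos(θ + (π/2)·|s_f−s_i|) + s_i·s_f ), where exp denotes the matrix exponential and ⟪·,·⟫ the standard Hermitian inner product on ℂ³, conjugate-linear in the first argument. -/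
open Matrix Complex

/-- The spin-1 operator `S_x`. -/
noncomputable def Sx : Matrix (Fin 3) (Fin 3) ℂ :=
  (1 / (Real.sqrt 2 : ℂ)) • !![0, 1, 0; 1, 0, 1; 0, 1, 0]

/-- The spin-1 operator `S_y`. -/
noncomputable def Sy : Matrix (Fin 3) (Fin 3) ℂ :=
  (1 / (Real.sqrt 2 : ℂ)) • !![0, -I, 0; I, 0, -I; 0, I, 0]

/-- The spin-1 operator `S_z`. -/
noncomputable def Sz : Matrix (Fin 3) (Fin 3) ℂ :=
  !![1, 0, 0; 0, 0, 0; 0, 0, -1]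

/-- Spin-1 raising operator `S₊ = S_z − i S_y`. -/
noncomputable def Sp : Matrix (Fin 3) (Fin 3) ℂ := Sz - I • Sy

/-- Spin-1 lowering operator `S₋ = S_z + i S_y`. -/
noncomputable def Sm : Matrix (Fin 3) (Fin 3) ℂ := Sz + I • Sy

/-- The effective spin-1 Hamiltonian `h(φ) = e^{iφ} S₊ + e^{−iφ} S₋`. -/
noncomputable def hMat (φ : ℝ) : Matrix (Fin 3) (Fin 3) ℂ :=
  Complex.exp (I * φ) • Sp + Complex.exp (-I * φ) • Sm

/-- The normalized eigenvectors `|s⟩` of `S_x` for `s ∈ {-1, 0, 1}`. -/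
noncomputable def vv : ℤ → Fin 3 → ℂ
  | 1 => (1 / 2 : ℂ) • ![1, (Real.sqrt 2 : ℂ), 1]
  | 0 => (1 / (Real.sqrt 2 : ℂ)) • ![1, 0, -1]
  | -1 => (1 / 2 : ℂ) • ![1, -(Real.sqrt 2 : ℂ), 1]
  | _ => 0

set_option maxHeartbeats 1000000

noncomputable def Pm (φ : ℝ) : Matrix (Fin 3) (Fin 3) ℂ :=
  !![((1 + Real.cos φ) / 2 : ℂ), -I * Real.sin φ / Real.sqrt 2, ((Real.cos φ - 1) / 2 : ℂ);
     -I * Real.sin φ / Real.sqrt 2, (Real.cos φ : ℂ), -I * Real.sin φ / Real.sqrt 2;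
     ((Real.cos φ - 1) / 2 : ℂ), -I * Real.sin φ / Real.sqrt 2, ((1 + Real.cos φ) / 2 : ℂ)]

lemma sqrt2_sq : ((Real.sqrt 2 : ℝ) : ℂ) ^ 2 = 2 := by
  norm_cast; exact Real.sq_sqrt (by norm_num)

lemma sqrt2_cube : ((Real.sqrt 2 : ℝ) : ℂ) ^ 3 = 2 * Real.sqrt 2 := by
  rw [pow_succ, sqrt2_sq]

lemma sqrt2_four : ((Real.sqrt 2 : ℝ) : ℂ) ^ 4 = 4 := by
  rw [show (4:ℕ) = 2*2 from rfl, pow_mul, sqrt2_sq]; norm_num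

lemma I_cube : I ^ 3 = -I := by
  rw [pow_succ, Complex.I_sq]; ring

lemma I_four : I ^ 4 = 1 := by
  rw [show (4:ℕ) = 2*2 from rfl, pow_mul, Complex.I_sq]; norm_num

lemma sin_sq' (z : ℂ) : Complex.sin z ^ 2 = 1 - Complex.cos z ^ 2 := by
  linear_combination Complex.sin_sq_add_cos_sq z

lemma sin_cube' (z : ℂ) : Complex.sin z ^ 3 = Complex.sin z * (1 - Complex.cos z ^ 2) := by
  rw [pow_succ, mul_comm, sin_sq']

lemma sqrt2_ne : ((Real.sqrt 2 : ℝ) : ℂ) ≠ 0 := by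
  simp [Real.sqrt_eq_zero']

lemma Pm_mul_Pm (φ : ℝ) : Pm φ * Pm (-φ) = 1 := by
  ext i j
  fin_cases i <;> fin_cases j <;>
    · simp only [Pm, Matrix.mul_apply, Fin.sum_univ_three, Real.cos_neg, Real.sin_neg,
        Matrix.cons_val', Matrix.cons_val_zero, Matrix.cons_val_one, Matrix.head_cons,
        Matrix.empty_val', Matrix.cons_val_fin_one, Matrix.head_fin_const, Matrix.cons_val, Matrix.cons_val_two, Matrix.tail_cons,
        Complex.ofReal_cos, Complex.ofReal_sin, Complex.ofReal_neg,
        Matrix.one_apply, Fin.mk.injEq, Matrix.of_apply]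
      norm_num <;>
      field_simp [sqrt2_ne] <;>
      ring_nf <;>
      simp only [Complex.I_sq, I_cube, I_four, sqrt2_sq, sqrt2_cube, sqrt2_four,
        sin_sq', sin_cube'] <;>
      ring_nf

lemma expI (φ : ℝ) : Complex.exp (I * φ) = Complex.cos φ + Complex.sin φ * I := by
  rw [mul_comm, Complex.exp_mul_I]

lemma expI' (φ : ℝ) : Complex.exp (-I * φ) = Complex.cos φ - Complex.sin φ * I := by
  rw [show (-I*(φ:ℂ)) = (-φ:ℂ)*I by push_cast; ring, Complex.exp_mul_I,
    Complex.cos_neg, Complex.sin_neg]; ring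

lemma key (θ φ : ℝ) :
    (-I * ((θ : ℂ) / 2)) • hMat φ =
      Pm (-φ) * Matrix.diagonal ![-I * θ, 0, I * θ] * Pm φ := by
  ext i j
  fin_cases i <;> fin_cases j <;>
    simp only [Pm, hMat, Sp, Sm, Sz, Sy, expI, expI', Matrix.mul_apply,
      Fin.sum_univ_three, Real.cos_neg, Real.sin_neg, Matrix.diagonal,
      Matrix.smul_apply, Matrix.add_apply, Matrix.sub_apply, Matrix.of_apply,
      Matrix.cons_val', Matrix.cons_val_zero, Matrix.cons_val_one, Matrix.head_cons,
      Matrix.empty_val', Matrix.cons_val_fin_one, Matrix.head_fin_const, Matrix.cons_val, Matrix.cons_val_two, Matrix.tail_cons,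
      Complex.ofReal_cos, Complex.ofReal_sin, Complex.ofReal_neg, smul_eq_mul] <;>
    simp only [Fin.isValue, show ((0:Fin 3) = 0) = True by simp, show ((1:Fin 3) = 1) = True by simp,
      show ((2:Fin 3) = 2) = True by simp, show ((0:Fin 3) = 1) = False by simp,
      show ((0:Fin 3) = 2) = False by simp, show ((1:Fin 3) = 0) = False by simp,
      show ((1:Fin 3) = 2) = False by simp, show ((2:Fin 3) = 0) = False by simp,
      show ((2:Fin 3) = 1) = False by simp, if_true, if_false] <;>
    norm_num <;>
    field_simp [sqrt2_ne] <;>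
    ring_nf <;>
    simp only [Complex.I_sq, I_cube, I_four, sqrt2_sq, sqrt2_cube, sqrt2_four,
      sin_sq', sin_cube'] <;>
    ring_nf

lemma expI2 (z : ℂ) : Complex.exp (I * z) = Complex.cos z + Complex.sin z * I := by
  rw [mul_comm, Complex.exp_mul_I]

lemma expI3 (z : ℂ) : Complex.exp (-(I * z)) = Complex.cos z - Complex.sin z * I := by
  rw [show (-(I*z)) = (-z)*I by ring, Complex.exp_mul_I, Complex.cos_neg, Complex.sin_neg]
  ring

lemma star_vv (s : ℤ) : star (vv s) = vv s := by
  unfold vv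
  split <;>
    · funext i
      fin_cases i <;>
        simp [Complex.star_def, Complex.conj_ofReal]

lemma Pm_transpose (φ : ℝ) : (Pm φ)ᵀ = Pm φ := by
  ext i j
  fin_cases i <;> fin_cases j <;> simp [Pm]

lemma eig (φ : ℝ) (s : ℤ) (hs : s ∈ ({-1, 0, 1} : Set ℤ)) :
    Pm φ *ᵥ vv s = Complex.exp (-I * s * φ) • vv s := by
  have hv : ∀ z : ℂ, Complex.exp (-I * z) = Complex.cos z - Complex.sin z * I := by
    intro z
    rw [show (-I*z) = (-z)*I by ring, Complex.exp_mul_I, Complex.cos_neg, Complex.sin_neg]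
    ring
  rcases hs with rfl | rfl | rfl <;>
    · funext i
      fin_cases i <;>
        simp only [vv, Pm, Matrix.mulVec, dotProduct, Fin.sum_univ_three,
          Int.cast_one, Int.cast_zero, Int.cast_neg, Int.cast_ofNat,
          Matrix.cons_val', Matrix.cons_val_zero, Matrix.cons_val_one, Matrix.head_cons,
          Matrix.empty_val', Matrix.cons_val_fin_one, Matrix.head_fin_const, Matrix.cons_val_two, Matrix.tail_cons,
          Matrix.of_apply, Pi.smul_apply, smul_eq_mul, hv,
          Complex.ofReal_cos, Complex.ofReal_sin] <;>
        norm_num <;>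
        field_simp [sqrt2_ne] <;>
        ring_nf <;>
        simp only [Complex.I_sq, I_cube, I_four, sqrt2_sq, sqrt2_cube, sqrt2_four,
          sin_sq', sin_cube', expI2, expI3] <;>
        ring_nf

lemma hexp (θ φ : ℝ) :
    NormedSpace.exp ((-I * ((θ : ℂ) / 2)) • hMat φ) =
      Pm (-φ) * Matrix.diagonal ![Complex.exp (-(I * θ)), 1, Complex.exp (I * θ)] * Pm φ := by
  have hUval : Pm (-φ) * Pm φ = 1 := by
    have := Pm_mul_Pm (-φ); rwa [neg_neg] at this
  set U : (Matrix (Fin 3) (Fin 3) ℂ)ˣ :=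
    ⟨Pm (-φ), Pm φ, hUval, Pm_mul_Pm φ⟩ with hUdef
  have h1 : (-I * ((θ : ℂ) / 2)) • hMat φ =
      (U : Matrix (Fin 3) (Fin 3) ℂ) * Matrix.diagonal ![-I * θ, 0, I * θ] *
        ((U⁻¹ : (Matrix (Fin 3) (Fin 3) ℂ)ˣ) : Matrix (Fin 3) (Fin 3) ℂ) := by
    rw [key θ φ]
    rfl
  rw [h1, Matrix.exp_units_conj U, Matrix.exp_diagonal]
  have h2 : NormedSpace.exp ![-I * (θ:ℂ), 0, I * θ] =
      ![Complex.exp (-(I * θ)), 1, Complex.exp (I * θ)] := by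
    rw [Pi.exp_def]
    funext i
    fin_cases i <;>
      simp [← Complex.exp_eq_exp_ℂ, Complex.exp_zero]
  rw [h2]
  rfl

lemma Dg_mul (θ : ℝ) :
    Matrix.diagonal ![Complex.exp (-(I * θ)), 1, Complex.exp (I * θ)] =
      !![Complex.exp (-(I * θ)), 0, 0; 0, 1, 0; 0, 0, Complex.exp (I * θ)] := by
  ext i j
  fin_cases i <;> fin_cases j <;> simp [Matrix.diagonal, Matrix.vecHead, Matrix.vecTail]

theorem conical_diffraction_amplitude' (θ φ : ℝ) (si sf : ℤ)
    (hsi : si ∈ ({-1, 0, 1} : Set ℤ)) (hsf : sf ∈ ({-1, 0, 1} : Set ℤ)) :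
    star (vv sf) ⬝ᵥ
        (NormedSpace.exp ((-I * ((θ : ℂ) / 2)) • hMat φ) *ᵥ vv si) =
      Complex.exp (I * ((sf : ℂ) - (si : ℂ)) * φ) *
        (((1 / 2 : ℝ) ^ (((sf ^ 2 + si ^ 2 : ℤ) : ℝ) / 2) : ℝ) : ℂ) *
        (I ^ (sf - si).natAbs *
            (Real.cos (θ + Real.pi / 2 * ((sf - si).natAbs : ℝ)) : ℂ) +
          ((si * sf : ℤ) : ℂ)) := by
  rw [hexp, star_vv, ← Matrix.mulVec_mulVec, ← Matrix.mulVec_mulVec,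
    eig φ si hsi, Matrix.mulVec_smul, Matrix.mulVec_smul, dotProduct_smul,
    Matrix.dotProduct_mulVec]
  have hleft : vv sf ᵥ* Pm (-φ) = Complex.exp (I * sf * φ) • vv sf := by
    rw [← Matrix.mulVec_transpose, Pm_transpose, eig (-φ) sf hsf,
      show (-I * (sf:ℂ) * ((-φ:ℝ):ℂ)) = I * sf * φ by push_cast; ring]
  rw [hleft, smul_dotProduct, Dg_mul]
  have hphase : Complex.exp (I * ((sf:ℂ) - si) * φ) =
      Complex.exp (-I * si * φ) * Complex.exp (I * sf * φ) := by
    rw [← Complex.exp_add]; ring_nf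
  rw [hphase]
  have hh : ((1/2:ℝ) ^ ((1/2):ℝ)) = (Real.sqrt 2)⁻¹ := by
    rw [← Real.sqrt_eq_rpow, show (1/2:ℝ) = 2⁻¹ by norm_num, Real.sqrt_inv]
  have hEp : Complex.exp (I * (θ:ℂ)) = Complex.cos θ + Complex.sin θ * I := expI2 θ
  have hEm : Complex.exp (-(I * (θ:ℂ))) = Complex.cos θ - Complex.sin θ * I := expI3 θ
  rcases hsi with rfl | rfl | rfl <;> rcases hsf with rfl | rfl | rfl <;>
    · norm_num [vv, Matrix.mulVec, dotProduct, Fin.sum_univ_three,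
        Matrix.cons_val', Matrix.cons_val_zero, Matrix.cons_val_one, Matrix.head_cons,
        Matrix.empty_val', Matrix.cons_val_fin_one, Matrix.head_fin_const, Matrix.of_apply, Matrix.cons_val_two, Matrix.tail_cons,
        Pi.smul_apply, smul_eq_mul, Real.cos_add_pi_div_two, hh,
        Matrix.vecHead, Matrix.vecTail,
        Complex.ofReal_cos, Complex.ofReal_sin, Complex.ofReal_inv] <;>
      simp only [hEp, hEm] <;>
      field_simp [sqrt2_ne] <;>
      ring_nf <;>
      simp only [Complex.I_sq, I_cube, I_four, sqrt2_sq, sqrt2_cube, sqrt2_four] <;>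
      ring_nf

/-- Transition amplitude for spin-1 conical diffraction: the matrix element of the
evolution operator `exp(−i(θ/2)h(φ))` between `S_x`-eigenstates `|s_i⟩` and `|s_f⟩`. -/
theorem conical_diffraction_amplitude (θ φ : ℝ) (si sf : ℤ)
    (hsi : si ∈ ({-1, 0, 1} : Set ℤ)) (hsf : sf ∈ ({-1, 0, 1} : Set ℤ)) :
    star (vv sf) ⬝ᵥ
        (NormedSpace.exp ((-I * ((θ : ℂ) / 2)) • hMat φ) *ᵥ vv si) =
      Complex.exp (I * ((sf : ℂ) - (si : ℂ)) * φ) *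
        (((1 / 2 : ℝ) ^ (((sf ^ 2 + si ^ 2 : ℤ) : ℝ) / 2) : ℝ) : ℂ) *
        (I ^ (sf - si).natAbs *
            (Real.cos (θ + Real.pi / 2 * ((sf - si).natAbs : ℝ)) : ℂ) +
          ((si * sf : ℤ) : ℂ)) :=
  conical_diffraction_amplitude' θ φ si sf hsi hsf
end
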